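/- Let n ≥ 3 and let m_1 < ... < m_n be a generalized arithmetic sequence with m_i = h·m_1 + (i-1)d for i ≥ 2, h > 1, h | d, gcd(m_1, d) = 1. Then β_0 := min{ b ∈ ℤ⁺ : b·m_2 ∈ ℕm_3 + ... + ℕm_n } equals ⌊(m_n - h)/(nh - 2h)⌋ + 1. -/

import Mathlib

/-- β₀ = ⌊(mₙ - h)/(nh - 2h)⌋ + 1. -/
theorem stmt_13 (n h d m1 : ℕ) (m : ℕ → ℕ)
    (hn : 3 ≤ n) (hh : 2 ≤ h) (hd : 1 ≤ d) (hm1 : 1 ≤ m1)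
    (hdvd : h ∣ d) (hgcd : Nat.gcd m1 d = 1)
    (hm0 : m 1 = m1)
    (hm : ∀ i, 2 ≤ i → i ≤ n → m i = h * m1 + (i - 1) * d) :
    IsLeast {b : ℕ | 0 < b ∧
        ∃ δ : ℕ → ℕ, b * m 2 = ∑ i ∈ Finset.Icc 3 n, δ i * m i}
      ((m n - h) / (n * h - 2 * h) + 1) := by
  obtain ⟨e, he⟩ := hdvd
  set k := n - 2 with hk
  have hk1 : 1 ≤ k := by omega
  have he1 : 1 ≤ e := by
    rcases Nat.eq_zero_or_pos e with h0 | h0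
    · subst h0; simp at he; omega
    · exact h0
  set a := m1 + e with ha
  have ha1 : 1 ≤ a := by omega
  -- coprimality
  have hgae : Nat.Coprime a e := by
    have h1 : Nat.Coprime m1 e := Nat.Coprime.coprime_dvd_right ⟨h, by rw [he]; ring⟩ hgcd
    exact Nat.coprime_add_self_left.mpr h1
  -- formulas for m
  have hm2 : m 2 = h * a := by
    rw [hm 2 le_rfl (by omega), he]; simp [ha]; ring
  have hmi : ∀ i, 3 ≤ i → i ≤ n → m i = h * (a + (i - 2) * e) := by
    intro i h3 hin
    rw [hm i (by omega) hin, he, ha]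
    have h1 : i - 1 = (i - 2) + 1 := by omega
    rw [h1]; ring
  have hmn : m n = h * (a + k * e) := hmi n hn le_rfl
  -- the target value
  set s' := (a - 1) / k with hs'
  have htarget : (m n - h) / (n * h - 2 * h) + 1 = e + s' + 1 := by
    have h1 : m n - h = h * (a + k * e - 1) := by
      rw [hmn, Nat.mul_sub, mul_one]
    have h2 : n * h - 2 * h = k * h := (Nat.sub_mul n 2 h).symm
    rw [h1, h2, mul_comm k h, Nat.mul_div_mul_left _ _ (by omega : 0 < h)]
    have h3 : a + k * e - 1 = (a - 1) + e * k := by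
      have : k * e = e * k := mul_comm k e
      omega
    rw [h3, Nat.add_mul_div_right _ _ (by omega : 0 < k)]
    omega
  rw [htarget]
  constructor
  · -- membership
    refine ⟨Nat.succ_pos _, ?_⟩
    set r := (a - 1) % k with hr
    have hrk : r < k := Nat.mod_lt _ (by omega)
    have hkey : a = r + 1 + k * s' := by
      have h0 := Nat.mod_add_div (a - 1) k
      rw [← hs', ← hr] at h0
      omega
    refine ⟨fun i => (if i = r + 3 then 1 else 0) + (if i = n then s' else 0), ?_⟩
    have hmem1 : r + 3 ∈ Finset.Icc 3 n := by
      simp only [Finset.mem_Icc]; omega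
    have hmem2 : n ∈ Finset.Icc 3 n := by
      simp only [Finset.mem_Icc]; omega
    have hsplit : ∑ i ∈ Finset.Icc 3 n,
        ((if i = r + 3 then 1 else 0) + (if i = n then s' else 0)) * m i
        = m (r + 3) + s' * m n := by
      rw [Finset.sum_congr rfl (fun i _ => add_mul _ _ _), Finset.sum_add_distrib]
      congr 1
      · have hc : ∀ x ∈ Finset.Icc 3 n,
            (if x = r + 3 then 1 else 0) * m x = if x = r + 3 then m x else 0 :=
          fun x _ => by split <;> simp
        rw [Finset.sum_congr rfl hc, Finset.sum_ite_eq' _ _ (fun i => m i), if_pos hmem1]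
      · have hc : ∀ x ∈ Finset.Icc 3 n,
            (if x = n then s' else 0) * m x = if x = n then s' * m x else 0 :=
          fun x _ => by split <;> simp
        rw [Finset.sum_congr rfl hc, Finset.sum_ite_eq' _ _ (fun i => s' * m i), if_pos hmem2]
    rw [hsplit, hmi (r + 3) (by omega) (by omega), hmn, hm2]
    have h4 : r + 3 - 2 = r + 1 := by omega
    rw [h4, hkey]
    ring
  · -- lower bound
    rintro b ⟨hb, δ, hδ⟩
    set s := ∑ i ∈ Finset.Icc 3 n, δ i with hs
    set t := ∑ i ∈ Finset.Icc 3 n, δ i * (i - 2) with ht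
    have hsum : ∑ i ∈ Finset.Icc 3 n, δ i * m i = h * (a * s + e * t) := by
      have hcong : ∀ i ∈ Finset.Icc 3 n,
          δ i * m i = h * a * δ i + h * e * (δ i * (i - 2)) := by
        intro i hi
        rw [Finset.mem_Icc] at hi
        rw [hmi i hi.1 hi.2]; ring
      rw [Finset.sum_congr rfl hcong, Finset.sum_add_distrib, ← Finset.mul_sum,
        ← Finset.mul_sum, ← hs, ← ht]
      ring
    have hba : b * a = a * s + e * t := by
      have h5 : h * (b * a) = h * (a * s + e * t) := by
        rw [← hsum, ← hδ, hm2]; ring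
      exact Nat.eq_of_mul_eq_mul_left (by omega) h5
    have hts : s ≤ t := by
      rw [hs, ht]
      apply Finset.sum_le_sum
      intro i hi
      rw [Finset.mem_Icc] at hi
      calc δ i = δ i * 1 := by ring
        _ ≤ δ i * (i - 2) := Nat.mul_le_mul_left _ (by omega)
    have htk : t ≤ k * s := by
      rw [hs, ht, Finset.mul_sum]
      apply Finset.sum_le_sum
      intro i hi
      rw [Finset.mem_Icc] at hi
      calc δ i * (i - 2) ≤ δ i * k := Nat.mul_le_mul_left _ (by omega)
        _ = k * δ i := mul_comm _ _
    have ht1 : 1 ≤ t := by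
      by_contra h0
      have ht0 : t = 0 := by omega
      have hs0 : s = 0 := by omega
      rw [ht0, hs0] at hba
      simp at hba
      rcases hba with h1 | h1 <;> omega
    have hbs : s ≤ b := by
      have : s * a ≤ b * a := by rw [hba]; nlinarith
      exact Nat.le_of_mul_le_mul_right this (by omega)
    have hsub : (b - s) * a = e * t := by
      have h6 : b * a = e * t + s * a := by rw [hba]; ring
      rw [Nat.sub_mul, h6, Nat.add_sub_cancel]
    have hat : a ∣ t := by
      have : a ∣ e * t := ⟨b - s, by rw [← hsub]; ring⟩
      exact (Nat.Coprime.dvd_of_dvd_mul_left hgae this)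
    obtain ⟨f, hf⟩ := hat
    have hf1 : 1 ≤ f := by
      rcases Nat.eq_zero_or_pos f with h0 | h0
      · subst h0; simp at hf; omega
      · exact h0
    have hbsef : b - s = e * f := by
      have h7 : (b - s) * a = (e * f) * a := by rw [hsub, hf]; ring
      exact Nat.eq_of_mul_eq_mul_right (by omega) h7
    have hebs : e ≤ b - s := by
      rw [hbsef]; exact Nat.le_mul_of_pos_right e hf1
    have hsk : s' < s := by
      rw [hs']
      rw [Nat.div_lt_iff_lt_mul (by omega : 0 < k), mul_comm]
      have : a ≤ t := by rw [hf]; exact Nat.le_mul_of_pos_right a hf1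
      omega
    omega
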